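/- Monotonicity in total vaccine budget for threshold strategies (reduced form): let a = ∫_X S₀, η ∈ (0,1), and for m in [0,K] let v_m = S₀·1_{w > s_m} with w = β/μ and s_m chosen so ∫_{w>s_m} S₀ = m (level sets of w have measure zero). Assume σ₀(v_m) = ∫ w (S₀ − v_m) > 1 for all m ∈ [0,K], and let σ_∞(v_m) ∈ [0,1) solve σ e^{−σ} = σ₀(v_m) e^{−σ₀(v_m)} η. Define N(m) = m + ∫_C S₀ e^{σ_∞(v_m) − σ₀(v_m)} η where C = {w ≤ s_m}. Then m ↦ N(m) is nondecreasing on [0,K]. -/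

import Mathlib

open MeasureTheory Real Set

private lemma hasDeriv_xexp (x : ℝ) :
    HasDerivAt (fun x : ℝ => x * Real.exp (-x)) ((1 - x) * Real.exp (-x)) x := by
  have h1 : HasDerivAt (fun x : ℝ => Real.exp (-x)) (-Real.exp (-x)) x := by
    simpa [Function.comp_def] using (Real.hasDerivAt_exp (-x)).comp x (hasDerivAt_neg x)
  have := (hasDerivAt_id x).mul h1
  refine this.congr_deriv ?_
  simp only [id_eq]
  ring

private lemma cont_xexp : Continuous (fun x : ℝ => x * Real.exp (-x)) :=
  continuous_id.mul (Real.continuous_exp.comp continuous_neg)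

private lemma gmono : StrictMonoOn (fun x : ℝ => x * Real.exp (-x)) (Set.Iic 1) := by
  apply strictMonoOn_of_deriv_pos (convex_Iic 1) cont_xexp.continuousOn
  intro x hx
  rw [interior_Iic] at hx
  rw [(hasDeriv_xexp x).deriv]
  have : 0 < 1 - x := by linarith [hx.out]
  positivity

private lemma ganti : AntitoneOn (fun x : ℝ => x * Real.exp (-x)) (Set.Ici 1) := by
  apply antitoneOn_of_deriv_nonpos (convex_Ici 1) cont_xexp.continuousOn
  · intro x hx
    exact (hasDeriv_xexp x).differentiableAt.differentiableWithinAt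
  · intro x hx
    rw [interior_Ici] at hx
    rw [(hasDeriv_xexp x).deriv]
    have h1 : 1 - x ≤ 0 := by linarith [hx.out]
    have := Real.exp_pos (-x)
    nlinarith

/-- Monotonicity in the total vaccine budget for threshold strategies
(reduced form): `m ↦ N(m)` is nondecreasing on `[0,K]`. -/
theorem stmt19 (A K η : ℝ) (hA : 0 < A) (hK : 0 < K) (hη : η ∈ Set.Ioo (0:ℝ) 1)
    (S₀ w s σ₀ σinf N : ℝ → ℝ)
    (hS₀c : ContinuousOn S₀ (Set.Icc 0 A))
    (hS₀pos : ∀ x ∈ Set.Icc (0:ℝ) A, 0 < S₀ x)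
    (hwm : Measurable w) (hwpos : ∀ x ∈ Set.Icc (0:ℝ) A, 0 < w x)
    (hlevel : ∀ t > (0:ℝ), volume {x ∈ Set.Icc (0:ℝ) A | w x = t} = 0)
    (hwint : IntegrableOn (fun x => w x * S₀ x) (Set.Icc 0 A))
    (hspos : ∀ m ∈ Set.Icc (0:ℝ) K, 0 < s m)
    (hmass : ∀ m ∈ Set.Icc (0:ℝ) K,
      (∫ x in {x ∈ Set.Icc (0:ℝ) A | s m < w x}, S₀ x) = m)
    (hσ₀def : ∀ m ∈ Set.Icc (0:ℝ) K,
      σ₀ m = ∫ x in {x ∈ Set.Icc (0:ℝ) A | w x ≤ s m}, w x * S₀ x)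
    (hσ₀gt : ∀ m ∈ Set.Icc (0:ℝ) K, 1 < σ₀ m)
    (hσinf : ∀ m ∈ Set.Icc (0:ℝ) K, σinf m ∈ Set.Ico (0:ℝ) 1 ∧
      σinf m * Real.exp (-(σinf m)) = σ₀ m * Real.exp (-(σ₀ m)) * η)
    (hNdef : ∀ m ∈ Set.Icc (0:ℝ) K, N m = m +
      (∫ x in {x ∈ Set.Icc (0:ℝ) A | w x ≤ s m}, S₀ x) *
        Real.exp (σinf m - σ₀ m) * η) :
    MonotoneOn N (Set.Icc 0 K) := by
  intro m₁ hm₁ m₂ hm₂ h12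
  rcases eq_or_lt_of_le h12 with rfl | hlt
  · exact le_refl _
  -- basic integrability / measurability
  have hS₀int : IntegrableOn S₀ (Set.Icc 0 A) := hS₀c.integrableOn_Icc
  have mLe : ∀ c : ℝ, MeasurableSet {x ∈ Set.Icc (0:ℝ) A | w x ≤ c} := fun c =>
    measurableSet_Icc.inter (measurableSet_le hwm measurable_const)
  have mGt : ∀ c : ℝ, MeasurableSet {x ∈ Set.Icc (0:ℝ) A | c < w x} := fun c =>
    measurableSet_Icc.inter (measurableSet_lt measurable_const hwm)
  have mB : MeasurableSet {x ∈ Set.Icc (0:ℝ) A | s m₂ < w x ∧ w x ≤ s m₁} :=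
    measurableSet_Icc.inter
      ((measurableSet_lt measurable_const hwm).inter (measurableSet_le hwm measurable_const))
  -- s m₂ ≤ s m₁
  have hsle : s m₂ ≤ s m₁ := by
    by_contra hcon
    push_neg at hcon
    have hsub : {x ∈ Set.Icc (0:ℝ) A | s m₂ < w x} ⊆ {x ∈ Set.Icc (0:ℝ) A | s m₁ < w x} :=
      fun x hx => ⟨hx.1, lt_trans hcon hx.2⟩
    have hnn : (0:ℝ → ℝ) ≤ᵐ[volume.restrict {x ∈ Set.Icc (0:ℝ) A | s m₁ < w x}] S₀ :=
      (ae_restrict_iff' (mGt (s m₁))).mpr (Filter.Eventually.of_forall fun x hx =>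
        (hS₀pos x hx.1).le)
    have := setIntegral_mono_set (hS₀int.mono_set fun x hx => hx.1) hnn
      (HasSubset.Subset.eventuallyLE hsub)
    rw [hmass m₁ hm₁, hmass m₂ hm₂] at this
    linarith
  set B : Set ℝ := {x ∈ Set.Icc (0:ℝ) A | s m₂ < w x ∧ w x ≤ s m₁} with hBdef
  -- set decompositions
  have hGtdecomp : {x ∈ Set.Icc (0:ℝ) A | s m₂ < w x}
      = {x ∈ Set.Icc (0:ℝ) A | s m₁ < w x} ∪ B := by
    ext x
    simp only [Set.mem_setOf_eq, Set.mem_union, hBdef]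
    constructor
    · rintro ⟨hx, hlt2⟩
      rcases le_or_gt (w x) (s m₁) with h | h
      · exact Or.inr ⟨hx, hlt2, h⟩
      · exact Or.inl ⟨hx, h⟩
    · rintro (⟨hx, h⟩ | ⟨hx, h, _⟩)
      · exact ⟨hx, lt_of_le_of_lt hsle h⟩
      · exact ⟨hx, h⟩
  have hLedecomp : {x ∈ Set.Icc (0:ℝ) A | w x ≤ s m₁}
      = {x ∈ Set.Icc (0:ℝ) A | w x ≤ s m₂} ∪ B := by
    ext x
    simp only [Set.mem_setOf_eq, Set.mem_union, hBdef]
    constructor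
    · rintro ⟨hx, hle1⟩
      rcases le_or_gt (w x) (s m₂) with h | h
      · exact Or.inl ⟨hx, h⟩
      · exact Or.inr ⟨hx, h, hle1⟩
    · rintro (⟨hx, h⟩ | ⟨hx, _, h⟩)
      · exact ⟨hx, le_trans h hsle⟩
      · exact ⟨hx, h⟩
  have hdisjGt : Disjoint {x ∈ Set.Icc (0:ℝ) A | s m₁ < w x} B := by
    rw [Set.disjoint_left]
    rintro x ⟨_, h⟩ ⟨_, _, h'⟩
    exact absurd h' (not_le.mpr h)
  have hdisjLe : Disjoint {x ∈ Set.Icc (0:ℝ) A | w x ≤ s m₂} B := by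
    rw [Set.disjoint_left]
    rintro x ⟨_, h⟩ ⟨_, h', _⟩
    exact absurd h (not_le.mpr h')
  -- integrabilities on subsets
  have hintGt1 : IntegrableOn S₀ {x ∈ Set.Icc (0:ℝ) A | s m₁ < w x} :=
    hS₀int.mono_set fun x hx => hx.1
  have hintLe2 : IntegrableOn S₀ {x ∈ Set.Icc (0:ℝ) A | w x ≤ s m₂} :=
    hS₀int.mono_set fun x hx => hx.1
  have hintB : IntegrableOn S₀ B := hS₀int.mono_set fun x hx => hx.1
  have hintwLe2 : IntegrableOn (fun x => w x * S₀ x) {x ∈ Set.Icc (0:ℝ) A | w x ≤ s m₂} :=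
    hwint.mono_set fun x hx => hx.1
  have hintwB : IntegrableOn (fun x => w x * S₀ x) B := hwint.mono_set fun x hx => hx.1
  -- ∫ B S₀ = m₂ - m₁
  have hmB : (∫ x in B, S₀ x) = m₂ - m₁ := by
    have := setIntegral_union hdisjGt mB hintGt1 hintB (f := S₀) (μ := volume)
    rw [← hGtdecomp, hmass m₁ hm₁, hmass m₂ hm₂] at this
    linarith
  -- ∫ over Le (s m₁) of S₀
  have hILe : (∫ x in {x ∈ Set.Icc (0:ℝ) A | w x ≤ s m₁}, S₀ x)
      = (∫ x in {x ∈ Set.Icc (0:ℝ) A | w x ≤ s m₂}, S₀ x) + (m₂ - m₁) := by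
    rw [hLedecomp, setIntegral_union hdisjLe mB hintLe2 hintB, hmB]
  -- σ₀ m₂ ≤ σ₀ m₁
  have hwB : 0 ≤ ∫ x in B, w x * S₀ x :=
    setIntegral_nonneg mB fun x hx =>
      (mul_pos (hwpos x hx.1) (hS₀pos x hx.1)).le
  have hσle : σ₀ m₂ ≤ σ₀ m₁ := by
    rw [hσ₀def m₁ hm₁, hσ₀def m₂ hm₂, hLedecomp,
      setIntegral_union hdisjLe mB hintwLe2 hintwB]
    linarith
  -- σinf m₁ ≤ σinf m₂
  obtain ⟨⟨h1a, h1b⟩, heq1⟩ := hσinf m₁ hm₁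
  obtain ⟨⟨h2a, h2b⟩, heq2⟩ := hσinf m₂ hm₂
  have hg : σ₀ m₁ * Real.exp (-(σ₀ m₁)) ≤ σ₀ m₂ * Real.exp (-(σ₀ m₂)) :=
    ganti (Set.mem_Ici.mpr (hσ₀gt m₂ hm₂).le) (Set.mem_Ici.mpr (hσ₀gt m₁ hm₁).le) hσle
  have hsinfle : σinf m₁ ≤ σinf m₂ := by
    have hgg : σinf m₁ * Real.exp (-(σinf m₁)) ≤ σinf m₂ * Real.exp (-(σinf m₂)) := by
      rw [heq1, heq2]
      exact mul_le_mul_of_nonneg_right hg hη.1.le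
    exact (gmono.le_iff_le (Set.mem_Iic.mpr h1b.le) (Set.mem_Iic.mpr h2b.le)).mp hgg
  -- final arithmetic
  have hIC : 0 ≤ ∫ x in {x ∈ Set.Icc (0:ℝ) A | w x ≤ s m₂}, S₀ x :=
    setIntegral_nonneg (mLe (s m₂)) fun x hx => (hS₀pos x hx.1).le
  have hE12 : Real.exp (σinf m₁ - σ₀ m₁) ≤ Real.exp (σinf m₂ - σ₀ m₂) :=
    Real.exp_le_exp.mpr (by linarith)
  have hE1lt : Real.exp (σinf m₁ - σ₀ m₁) < 1 := by
    rw [Real.exp_lt_one_iff]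
    linarith [hσ₀gt m₁ hm₁]
  have hE1pos : 0 < Real.exp (σinf m₁ - σ₀ m₁) := Real.exp_pos _
  rw [hNdef m₁ hm₁, hNdef m₂ hm₂, hILe]
  obtain ⟨hη0, hη1⟩ := hη
  nlinarith [mul_nonneg (mul_nonneg hIC (sub_nonneg.mpr hE12)) hη0.le,
    mul_nonneg (sub_nonneg.mpr hlt.le)
      (by nlinarith : (0:ℝ) ≤ 1 - Real.exp (σinf m₁ - σ₀ m₁) * η)]
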